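/- There exists ε₀ ∈ (0, 1/e) such that for every ε ∈ (0, ε₀) for which k := ln(1/ε)/(4·ln(ln(1/ε))) is an integer, the following holds on the hard instance with parameter ε: for every measurable threshold function τ : [0,1] → [0,∞), the time-based threshold algorithm satisfies E[ALG_τ] < (1 − ε)·(1 + √ε·(1 − 1/k)). -/

import Mathlib

open MeasureTheory ProbabilityTheory
open scoped ENNReal

/-- Integral upper bound from a set where `f = c` and a global bound `M`. -/
lemma helper_int_bound {Ω : Type*} [MeasurableSpace Ω] (μ : Measure Ω) [IsProbabilityMeasure μ]
    (f : Ω → ℝ) (hf : Measurable f) {G : Set Ω} (hG : MeasurableSet G)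
    (c M : ℝ) (hM0 : 0 ≤ M)
    (h0 : ∀ᵐ ω ∂μ, 0 ≤ f ω) (hM : ∀ᵐ ω ∂μ, f ω ≤ M)
    (hfc : ∀ᵐ ω ∂μ, ω ∈ G → f ω = c) :
    ∫ ω, f ω ∂μ ≤ c * (μ G).toReal + M * (1 - (μ G).toReal) := by
  have hint : Integrable f μ := by
    refine Integrable.mono' (integrable_const M) hf.aestronglyMeasurable ?_
    filter_upwards [h0, hM] with ω h1 h2
    rw [Real.norm_eq_abs, abs_le]; constructor <;> linarith
  have hsplit : ∫ ω, f ω ∂μ = ∫ ω in G, f ω ∂μ + ∫ ω in Gᶜ, f ω ∂μ :=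
    (integral_add_compl hG hint).symm
  have h1 : ∫ ω in G, f ω ∂μ = c * (μ G).toReal := by
    rw [setIntegral_congr_ae hG (by filter_upwards [hfc] with ω h hmem; exact h hmem)]
    rw [setIntegral_const, smul_eq_mul, mul_comm]; rfl
  have h2 : ∫ ω in Gᶜ, f ω ∂μ ≤ M * (1 - (μ G).toReal) := by
    have hmono : ∫ ω in Gᶜ, f ω ∂μ ≤ ∫ _ω in Gᶜ, M ∂μ :=
      integral_mono_ae hint.restrict (integrable_const M) (ae_restrict_of_ae hM)
    have hc : (μ Gᶜ).toReal = 1 - (μ G).toReal := by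
      rw [measure_compl hG (measure_ne_top _ _), measure_univ,
        ENNReal.toReal_sub_of_le prob_le_one ENNReal.one_ne_top, ENNReal.toReal_one]
    calc ∫ ω in Gᶜ, f ω ∂μ ≤ ∫ _ω in Gᶜ, M ∂μ := hmono
      _ = (μ Gᶜ).toReal * M := by rw [setIntegral_const, smul_eq_mul]; rfl
      _ = M * (1 - (μ G).toReal) := by rw [hc]; ring
  linarith

/-- Independence product formula for our family of rewards and arrival times. -/
lemma helper_indep_prod {k : ℕ} {Ω : Type*} [MeasurableSpace Ω] {μ : Measure Ω}
    [IsProbabilityMeasure μ]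
    (V t : Fin 2 × Fin k → Ω → ℝ)
    (hindep : iIndepFun (Sum.elim V t) μ)
    (BV Bt : Fin 2 × Fin k → Set ℝ) (hBV : ∀ p, MeasurableSet (BV p))
    (hBt : ∀ p, MeasurableSet (Bt p)) :
    μ ((⋂ p, V p ⁻¹' BV p) ∩ (⋂ p, t p ⁻¹' Bt p)) =
      (∏ p, μ (V p ⁻¹' BV p)) * (∏ p, μ (t p ⁻¹' Bt p)) := by
  have key := hindep.meas_iInter
    (s := fun i => Sum.elim V t i ⁻¹' Sum.elim BV Bt i) (fun i => by
      cases i with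
      | inl p => exact ⟨BV p, hBV p, rfl⟩
      | inr p => exact ⟨Bt p, hBt p, rfl⟩)
  have hset : (⋂ i, Sum.elim V t i ⁻¹' Sum.elim BV Bt i) =
      (⋂ p, V p ⁻¹' BV p) ∩ (⋂ p, t p ⁻¹' Bt p) := by
    ext ω
    simp only [Set.mem_iInter, Set.mem_inter_iff]
    constructor
    · intro h
      exact ⟨fun p => h (Sum.inl p), fun p => h (Sum.inr p)⟩
    · intro h i
      cases i with
      | inl p => exact h.1 p
      | inr p => exact h.2 p
  rw [hset] at key
  rw [key, Fintype.prod_sum_type]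
  rfl

set_option maxHeartbeats 2000000 in
theorem stmt10 :
    ∃ ε₀ ∈ Set.Ioo (0:ℝ) (1 / Real.exp 1),
      ∀ ε : ℝ, 0 < ε → ε < ε₀ →
      ∀ k : ℕ, (k : ℝ) = Real.log (1 / ε) / (4 * Real.log (Real.log (1 / ε))) →
      ∀ (Ω : Type*) (mΩ : MeasurableSpace Ω) (μ : Measure Ω), IsProbabilityMeasure μ →
      ∀ V t : Fin 2 × Fin k → Ω → ℝ,
      (∀ p, Measurable (V p)) → (∀ p, Measurable (t p)) →
      -- rewards of the first type are deterministically 1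
      (∀ j : Fin k, Measure.map (V (0, j)) μ = Measure.dirac 1) →
      -- rewards of the second type are 1+√ε w.p. 1−p and 0 w.p. p, with p = 1/k
      (∀ j : Fin k, Measure.map (V (1, j)) μ =
        ENNReal.ofReal (1 / (k:ℝ)) • Measure.dirac 0
          + ENNReal.ofReal (1 - 1 / (k:ℝ)) • Measure.dirac (1 + Real.sqrt ε)) →
      -- arrival times are uniform on [0,1]
      (∀ p, Measure.map (t p) μ = volume.restrict (Set.Icc (0:ℝ) 1)) →
      -- all rewards and arrival times are mutually independent
      iIndepFun (Sum.elim V t) μ →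
      -- any measurable threshold function τ : [0,1] → [0,∞)
      ∀ τ : ℝ → ℝ, Measurable τ → (∀ s, 0 ≤ τ s) →
      -- ALG is the value of the time-based threshold algorithm defined by τ
      ∀ ALG : Ω → ℝ, Measurable ALG →
      (∀ᵐ ω ∂μ, (∀ p : Fin 2 × Fin k, ¬ τ (t p ω) < V p ω) → ALG ω = 0) →
      (∀ᵐ ω ∂μ, ∀ p : Fin 2 × Fin k, τ (t p ω) < V p ω →
        (∀ q : Fin 2 × Fin k, τ (t q ω) < V q ω → t p ω ≤ t q ω) → ALG ω = V p ω) →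
      ∫ ω, ALG ω ∂μ < (1 - ε) * (1 + Real.sqrt ε * (1 - 1 / (k:ℝ))) := by
  classical
  refine ⟨Real.exp (-(10^8 : ℝ)), ⟨Real.exp_pos _, ?_⟩, ?_⟩
  · rw [one_div, ← Real.exp_neg]
    exact Real.exp_lt_exp.mpr (by norm_num)
  intro ε hε hεlt k hk Ω mΩ μ hμ V t hVm htm hlaw0 hlaw1 hlawt hindep τ hτ hτ0 ALG hALGm
    hALG0 hALGmin
  -- ### Real-number setup
  set L := Real.log (1/ε) with hLdef
  set lg := Real.log L with hlgdef
  set Q := Real.sqrt (Real.sqrt L) with hQdef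
  have hL : (10^8 : ℝ) < L := by
    have h1 : Real.exp (10^8) < 1/ε := by
      have h2 := one_div_lt_one_div_of_lt hε hεlt
      rwa [one_div (Real.exp _), ← Real.exp_neg, neg_neg] at h2
    calc (10^8:ℝ) = Real.log (Real.exp (10^8)) := (Real.log_exp _).symm
    _ < L := Real.log_lt_log (Real.exp_pos _) h1
  have hLpos : (0:ℝ) < L := by linarith
  have hQpos : 0 < Q := Real.sqrt_pos.mpr (Real.sqrt_pos.mpr hLpos)
  have hQ4 : Q^4 = L := by
    rw [hQdef, show (4:ℕ) = 2*2 from rfl, pow_mul, Real.sq_sqrt (Real.sqrt_nonneg L),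
      Real.sq_sqrt hLpos.le]
  have hQ100 : (100:ℝ) ≤ Q := by
    by_contra h
    push_neg at h
    have h4 : Q^4 ≤ 100^4 := pow_le_pow_left₀ hQpos.le h.le 4
    rw [hQ4] at h4
    norm_num at h4
    linarith
  have hlgQ : lg ≤ 4*Q := by
    have h1 : lg = 4 * Real.log Q := by
      rw [hlgdef, ← hQ4, Real.log_pow]; norm_num
    have h2 : Real.log Q ≤ Q - 1 := Real.log_le_sub_one_of_pos hQpos
    linarith
  have hlg2 : (2:ℝ) < lg := by
    rw [hlgdef, ← Real.log_exp 2]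
    apply Real.log_lt_log (Real.exp_pos 2)
    have h9 := Real.exp_one_lt_d9
    calc Real.exp 2 = Real.exp 1 * Real.exp 1 := by rw [← Real.exp_add]; norm_num
    _ < 10^8 := by nlinarith [Real.exp_pos 1]
    _ < L := hL
  have hlgpos : (0:ℝ) < lg := by linarith
  have hkpos : (0:ℝ) < (k:ℝ) := by rw [hk]; positivity
  have hknpos : 0 < k := by exact_mod_cast hkpos
  have hklg : (k:ℝ) * lg = L/4 := by rw [hk]; field_simp
  have hk2 : (2:ℝ) ≤ (k:ℝ) := by
    rw [hk, le_div_iff₀ (by positivity)]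
    have hQ3 : (100:ℝ)^3 ≤ Q^3 := pow_le_pow_left₀ (by norm_num) hQ100 3
    nlinarith [mul_le_mul_of_nonneg_right hQ3 hQpos.le, hlgQ, hQpos.le]
  have hkL : (k:ℝ) ≤ L := by
    rw [hk, div_le_iff₀ (by positivity)]
    nlinarith [mul_le_mul_of_nonneg_left (by linarith : (1:ℝ) ≤ 4*lg) hLpos.le]
  have hεexp : ε = Real.exp (-L) := by
    rw [hLdef, one_div, Real.log_inv, neg_neg, Real.exp_log hε]
  have hsqε : Real.sqrt ε = Real.exp (-(L/2)) := by
    rw [hεexp, ← Real.exp_half]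
    congr 1; ring
  have hε1 : ε < 1 := by
    rw [hεexp]
    exact Real.exp_lt_one_iff.mpr (by linarith)
  have hsqpos : 0 < Real.sqrt ε := Real.sqrt_pos.mpr hε
  have hsqnn : 0 ≤ Real.sqrt ε := hsqpos.le
  have hsq1 : Real.sqrt ε ≤ 1 := by
    rw [show (1:ℝ) = Real.sqrt 1 from (Real.sqrt_one).symm]
    exact Real.sqrt_le_sqrt hε1.le
  have hexpL4 : ((1:ℝ)/L)^k = Real.exp (-(L/4)) := by
    have h1 : (1:ℝ)/L = Real.exp (-lg) := by
      rw [Real.exp_neg, hlgdef, Real.exp_log hLpos, one_div]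
    rw [h1, ← Real.exp_nat_mul, mul_neg, hklg]
  have hsqQ : Real.sqrt ε ≤ 8/Q^4 := by
    rw [hsqε, hQ4]
    have h1 : Real.exp (-(L/2)) ≤ Real.exp (-(L/8)) :=
      Real.exp_le_exp.mpr (by linarith)
    have h2 : Real.exp (-(L/8)) ≤ 8/L := by
      rw [Real.exp_neg]
      calc (Real.exp (L/8))⁻¹ ≤ (L/8)⁻¹ :=
            inv_anti₀ (by positivity) (by linarith [Real.add_one_le_exp (L/8)])
        _ = 8/L := by rw [inv_div]
    linarith
  -- ### Measure-theoretic helpers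
  have ht_ev : ∀ p (A : Set ℝ), MeasurableSet A → μ (t p ⁻¹' A) = volume (A ∩ Set.Icc 0 1) := by
    intro p A hA
    rw [← Measure.map_apply (htm p) hA, hlawt p, Measure.restrict_apply hA]
  have hV1zero : ∀ j, μ (V (1,j) ⁻¹' {0}) = ENNReal.ofReal (1/(k:ℝ)) := by
    intro j
    rw [← Measure.map_apply (hVm (1,j)) (measurableSet_singleton 0), hlaw1 j]
    have hne : (1:ℝ) + Real.sqrt ε ∉ ({0}:Set ℝ) := by
      simp only [Set.mem_singleton_iff]
      intro h; linarith [Real.sqrt_nonneg ε]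
    rw [Measure.add_apply, Measure.smul_apply, Measure.smul_apply,
      Measure.dirac_apply' _ (measurableSet_singleton 0),
      Measure.dirac_apply' _ (measurableSet_singleton 0)]
    rw [Set.indicator_of_mem (by simp) 1, Set.indicator_of_notMem hne 1]
    simp
  have hV0ae : ∀ᵐ ω ∂μ, ∀ j, V (0,j) ω = 1 := by
    rw [ae_all_iff]
    intro j
    have h0 : μ (V (0,j) ⁻¹' {(1:ℝ)}ᶜ) = 0 := by
      rw [← Measure.map_apply (hVm (0,j)) (measurableSet_singleton 1).compl, hlaw0 j,
        Measure.dirac_apply' _ (measurableSet_singleton 1).compl]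
      simp
    rw [ae_iff]
    convert h0 using 2
    rfl
  have hV1ae : ∀ᵐ ω ∂μ, ∀ j, V (1,j) ω = 0 ∨ V (1,j) ω = 1 + Real.sqrt ε := by
    rw [ae_all_iff]
    intro j
    have hAm : MeasurableSet ({(0:ℝ), 1 + Real.sqrt ε} : Set ℝ) :=
      (measurableSet_singleton _).insert 0
    have h0 : μ (V (1,j) ⁻¹' ({(0:ℝ), 1 + Real.sqrt ε} : Set ℝ)ᶜ) = 0 := by
      rw [← Measure.map_apply (hVm (1,j)) hAm.compl, hlaw1 j]
      rw [Measure.add_apply, Measure.smul_apply, Measure.smul_apply,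
        Measure.dirac_apply' _ hAm.compl, Measure.dirac_apply' _ hAm.compl]
      rw [Set.indicator_of_notMem (by simp) 1, Set.indicator_of_notMem (by simp) 1]
      simp
    rw [ae_iff]
    convert h0 using 2
    rfl
  -- selecting the accepted reward
  have hminsel : ∀ ω : Ω, (∃ p, τ (t p ω) < V p ω) →
      ∃ p, (τ (t p ω) < V p ω) ∧ ∀ q, τ (t q ω) < V q ω → t p ω ≤ t q ω := by
    rintro ω ⟨p₀, hp₀⟩
    obtain ⟨p, hp, hpmin⟩ := Finset.exists_min_image
      (Finset.univ.filter fun p => τ (t p ω) < V p ω) (fun p => t p ω)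
      ⟨p₀, by simp [hp₀]⟩
    exact ⟨p, by simpa using hp, fun q hq => hpmin q (by simp [hq])⟩
  -- ALG takes values in [0, 1+√ε] a.e.
  have hALGrange : ∀ᵐ ω ∂μ, 0 ≤ ALG ω ∧ ALG ω ≤ 1 + Real.sqrt ε := by
    filter_upwards [hALG0, hALGmin, hV0ae, hV1ae] with ω h0 hm hv0 hv1
    by_cases hacc : ∃ p, τ (t p ω) < V p ω
    · obtain ⟨p, hp, hpmin⟩ := hminsel ω hacc
      have hALGp : ALG ω = V p ω := hm p hp hpmin
      obtain ⟨i, j⟩ := p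
      rcases (by omega : i = 0 ∨ i = 1) with hi | hi <;> subst hi
      · rw [hALGp, hv0 j]
        exact ⟨by norm_num, by linarith⟩
      · rcases hv1 j with h | h
        · rw [h] at hp
          exact absurd hp (not_lt.mpr (hτ0 _))
        · rw [hALGp, h]
          exact ⟨by linarith, le_refl _⟩
    · push_neg at hacc
      rw [h0 (fun p => not_lt.mpr (hacc p))]
      exact ⟨le_refl _, by linarith⟩
  -- ### The bad-time set S and its measure
  set S : Set ℝ := τ ⁻¹' Set.Iio 1 with hSdef
  have hSm : MeasurableSet S := hτ measurableSet_Iio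
  have hIcc1 : volume (Set.Icc (0:ℝ) 1) = 1 := by
    rw [Real.volume_Icc]; norm_num
  set m2 : ℝ≥0∞ := volume (Sᶜ ∩ Set.Icc 0 1) with hm2def
  have hm2le : m2 ≤ 1 := by
    rw [hm2def, ← hIcc1]
    exact measure_mono Set.inter_subset_right
  have hm2top : m2 ≠ ⊤ := (lt_of_le_of_lt hm2le (by norm_num)).ne
  set m2r : ℝ := m2.toReal with hm2rdef
  have hm2r0 : 0 ≤ m2r := ENNReal.toReal_nonneg
  have hm2r1 : m2r ≤ 1 := by
    rw [hm2rdef, show (1:ℝ) = (1:ℝ≥0∞).toReal from rfl]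
    exact ENNReal.toReal_mono (by norm_num) hm2le
  have hm2back : m2 = ENNReal.ofReal m2r := (ENNReal.ofReal_toReal hm2top).symm
  -- common bound extraction
  have hALGlo : ∀ᵐ ω ∂μ, 0 ≤ ALG ω := hALGrange.mono fun ω h => h.1
  have hALGhi : ∀ᵐ ω ∂μ, ALG ω ≤ 1 + Real.sqrt ε := hALGrange.mono fun ω h => h.2
  by_cases hcase : 1/L ≤ m2r
  · -- ### Case 1 : τ is at least 1 on a non-negligible part of [0,1]
    set BV0 : Fin 2 × Fin k → Set ℝ := fun p => if p.1 = 1 then {0} else Set.univ with hBV0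
    set Bt0 : Fin 2 × Fin k → Set ℝ := fun p => if p.1 = 0 then Sᶜ else Set.univ with hBt0
    have hBV0m : ∀ p, MeasurableSet (BV0 p) := by
      intro p; rw [hBV0]; dsimp only
      split
      · exact measurableSet_singleton 0
      · exact MeasurableSet.univ
    have hBt0m : ∀ p, MeasurableSet (Bt0 p) := by
      intro p; rw [hBt0]; dsimp only
      split
      · exact hSm.compl
      · exact MeasurableSet.univ
    set G0 : Set Ω := (⋂ p, V p ⁻¹' BV0 p) ∩ (⋂ p, t p ⁻¹' Bt0 p) with hG0
    have hG0m : MeasurableSet G0 :=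
      (MeasurableSet.iInter fun p => hVm p (hBV0m p)).inter
        (MeasurableSet.iInter fun p => htm p (hBt0m p))
    have hG0meas : μ G0 = ENNReal.ofReal (1/(k:ℝ)) ^ k * m2 ^ k := by
      rw [hG0, helper_indep_prod V t hindep BV0 Bt0 hBV0m hBt0m]
      have hpV : ∏ p, μ (V p ⁻¹' BV0 p) = ENNReal.ofReal (1/(k:ℝ)) ^ k := by
        rw [Fintype.prod_prod_type, Fin.prod_univ_two]
        have e0 : ∀ j : Fin k, μ (V (0,j) ⁻¹' BV0 (0,j)) = 1 := by
          intro j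
          rw [hBV0]
          norm_num
        have e1 : ∀ j : Fin k, μ (V (1,j) ⁻¹' BV0 (1,j)) = ENNReal.ofReal (1/(k:ℝ)) := by
          intro j
          rw [hBV0]
          simpa using hV1zero j
        rw [Finset.prod_congr rfl (fun j _ => e0 j), Finset.prod_congr rfl (fun j _ => e1 j)]
        simp [Finset.card_univ]
      have hpT : ∏ p, μ (t p ⁻¹' Bt0 p) = m2 ^ k := by
        rw [Fintype.prod_prod_type, Fin.prod_univ_two]
        have e0 : ∀ j : Fin k, μ (t (0,j) ⁻¹' Bt0 (0,j)) = m2 := by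
          intro j
          rw [hBt0]
          simpa using ht_ev (0,j) Sᶜ hSm.compl
        have e1 : ∀ j : Fin k, μ (t (1,j) ⁻¹' Bt0 (1,j)) = 1 := by
          intro j
          rw [hBt0]
          norm_num
        rw [Finset.prod_congr rfl (fun j _ => e0 j), Finset.prod_congr rfl (fun j _ => e1 j)]
        simp [Finset.card_univ]
      rw [hpV, hpT]
    have hg0 : (μ G0).toReal = (1/(k:ℝ))^k * m2r^k := by
      rw [hG0meas, hm2back, ← ENNReal.ofReal_pow (by positivity), ← ENNReal.ofReal_pow hm2r0,
        ← ENNReal.ofReal_mul (by positivity), ENNReal.toReal_ofReal (by positivity)]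
    have hg0ge : Real.sqrt ε ≤ (μ G0).toReal := by
      rw [hg0, hsqε]
      have h1 : Real.exp (-(L/4)) ≤ (1/(k:ℝ))^k := by
        rw [← hexpL4]
        exact pow_le_pow_left₀ (by positivity) (by
          apply one_div_le_one_div_of_le hkpos hkL) k
      have h2 : Real.exp (-(L/4)) ≤ m2r^k := by
        rw [← hexpL4]
        exact pow_le_pow_left₀ (by positivity) hcase k
      calc Real.exp (-(L/2)) = Real.exp (-(L/4)) * Real.exp (-(L/4)) := by
            rw [← Real.exp_add]; ring_nf
        _ ≤ (1/(k:ℝ))^k * m2r^k :=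
            mul_le_mul h1 h2 (Real.exp_pos _).le (by positivity)
    have hALG_G0 : ∀ᵐ ω ∂μ, ω ∈ G0 → ALG ω = 0 := by
      filter_upwards [hALG0, hV0ae] with ω h0 hv0 hmem
      obtain ⟨hmV, hmt⟩ := hmem
      rw [Set.mem_iInter] at hmV hmt
      apply h0
      rintro ⟨i, j⟩
      rcases (by omega : i = 0 ∨ i = 1) with hi | hi <;> subst hi
      · have hts : t (0,j) ω ∈ Sᶜ := by
          have := hmt (0,j)
          rw [hBt0] at this
          simpa using this
        rw [hv0 j]
        simpa [hSdef] using hts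
      · have hV1 : V (1,j) ω = 0 := by
          have := hmV (1,j)
          rw [hBV0] at this
          simpa using this
        rw [hV1]
        exact not_lt.mpr (hτ0 _)
    have hbound := helper_int_bound μ ALG hALGm hG0m 0 (1 + Real.sqrt ε) (by linarith)
      hALGlo hALGhi hALG_G0
    have hg0le1 : (μ G0).toReal ≤ 1 := by
      rw [show (1:ℝ) = (1:ℝ≥0∞).toReal from rfl]
      exact ENNReal.toReal_mono (by norm_num) prob_le_one
    have h1k : 1/(k:ℝ) ≤ 1/2 := by
      apply one_div_le_one_div_of_le <;> linarith
    have hfin : (1 + Real.sqrt ε) * (1 - (μ G0).toReal) ≤ 1 - ε := by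
      have h3 : (1 + Real.sqrt ε) * (1 - (μ G0).toReal) ≤
          (1 + Real.sqrt ε) * (1 - Real.sqrt ε) := by
        apply mul_le_mul_of_nonneg_left (by linarith) (by linarith)
      have h4 : (1 + Real.sqrt ε) * (1 - Real.sqrt ε) = 1 - ε := by
        have := Real.sq_sqrt hε.le
        nlinarith [this]
      linarith
    have hrhs : 1 - ε < (1 - ε) * (1 + Real.sqrt ε * (1 - 1/(k:ℝ))) := by
      nlinarith [mul_pos (show (0:ℝ) < 1 - ε by linarith)
        (mul_pos hsqpos (show (0:ℝ) < 1 - 1/(k:ℝ) by linarith))]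
    calc ∫ ω, ALG ω ∂μ ≤ 0 * (μ G0).toReal + (1 + Real.sqrt ε) * (1 - (μ G0).toReal) := hbound
      _ = (1 + Real.sqrt ε) * (1 - (μ G0).toReal) := by ring
      _ ≤ 1 - ε := hfin
      _ < (1 - ε) * (1 + Real.sqrt ε * (1 - 1/(k:ℝ))) := hrhs
  · -- ### Case 2 : τ < 1 almost everywhere on [0,1]
    push_neg at hcase
    set u : ℝ := 2/L with hudef
    have hu0 : 0 < u := by rw [hudef]; positivity
    have hu2 : u ≤ 1/2 := by
      rw [hudef, div_le_div_iff₀ hLpos (by norm_num)]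
      linarith
    set X : Set ℝ := S ∩ Set.Iic u with hXdef
    have hXm : MeasurableSet X := hSm.inter measurableSet_Iic
    set BVu : Fin 2 × Fin k → Set ℝ := fun _ => Set.univ with hBVu
    set BtA : Fin 2 × Fin k → Set ℝ := fun p => if p.1 = 1 then Set.Ioi u else Set.univ
      with hBtA
    set BtB : Fin 2 × Fin k → Set ℝ := fun p => if p.1 = 1 then Set.Ioi u else Xᶜ with hBtB
    have hBtAm : ∀ p, MeasurableSet (BtA p) := by
      intro p; rw [hBtA]; dsimp only
      split
      · exact measurableSet_Ioi
      · exact MeasurableSet.univ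
    have hBtBm : ∀ p, MeasurableSet (BtB p) := by
      intro p; rw [hBtB]; dsimp only
      split
      · exact measurableSet_Ioi
      · exact hXm.compl
    set A1 : Set Ω := (⋂ p, V p ⁻¹' BVu p) ∩ (⋂ p, t p ⁻¹' BtA p) with hA1
    set A2 : Set Ω := (⋂ p, V p ⁻¹' BVu p) ∩ (⋂ p, t p ⁻¹' BtB p) with hA2
    have hA1m : MeasurableSet A1 :=
      (MeasurableSet.iInter fun p => hVm p MeasurableSet.univ).inter
        (MeasurableSet.iInter fun p => htm p (hBtAm p))
    have hA2m : MeasurableSet A2 :=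
      (MeasurableSet.iInter fun p => hVm p MeasurableSet.univ).inter
        (MeasurableSet.iInter fun p => htm p (hBtBm p))
    have hA2sub : A2 ⊆ A1 := by
      rw [hA1, hA2]
      apply Set.inter_subset_inter_right
      apply Set.iInter_mono
      intro p
      apply Set.preimage_mono
      rw [hBtA, hBtB]; dsimp only
      split
      · exact subset_rfl
      · exact Set.subset_univ _
    -- measures of the two events
    have hIoi : volume (Set.Ioi u ∩ Set.Icc 0 1) = ENNReal.ofReal (1 - u) := by
      have he : Set.Ioi u ∩ Set.Icc (0:ℝ) 1 = Set.Ioc u 1 := by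
        ext x
        simp only [Set.mem_inter_iff, Set.mem_Ioi, Set.mem_Icc, Set.mem_Ioc]
        constructor
        · rintro ⟨h1, _, h3⟩; exact ⟨h1, h3⟩
        · rintro ⟨h1, h2⟩; exact ⟨h1, by linarith, h2⟩
      rw [he, Real.volume_Ioc]
    have hμA1 : μ A1 = ENNReal.ofReal (1-u) ^ k := by
      rw [hA1, helper_indep_prod V t hindep BVu BtA (fun p => MeasurableSet.univ) hBtAm]
      have hpV : ∏ p, μ (V p ⁻¹' BVu p) = 1 := by
        rw [hBVu]; simp
      have hpT : ∏ p, μ (t p ⁻¹' BtA p) = ENNReal.ofReal (1-u) ^ k := by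
        rw [Fintype.prod_prod_type, Fin.prod_univ_two]
        have e0 : ∀ j : Fin k, μ (t (0,j) ⁻¹' BtA (0,j)) = 1 := by
          intro j; rw [hBtA]; norm_num
        have e1 : ∀ j : Fin k, μ (t (1,j) ⁻¹' BtA (1,j)) = ENNReal.ofReal (1-u) := by
          intro j; rw [hBtA]
          have := ht_ev (1,j) (Set.Ioi u) measurableSet_Ioi
          rw [hIoi] at this
          simpa using this
        rw [Finset.prod_congr rfl (fun j _ => e0 j), Finset.prod_congr rfl (fun j _ => e1 j)]
        simp [Finset.card_univ]
      rw [hpV, hpT, one_mul]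
    set c2 : ℝ≥0∞ := volume (Xᶜ ∩ Set.Icc 0 1) with hc2def
    set Fv : ℝ≥0∞ := volume (X ∩ Set.Icc 0 1) with hFvdef
    have hc2le : c2 ≤ 1 := by
      rw [hc2def, ← hIcc1]
      exact measure_mono Set.inter_subset_right
    have hFvle : Fv ≤ 1 := by
      rw [hFvdef, ← hIcc1]
      exact measure_mono Set.inter_subset_right
    have hc2top : c2 ≠ ⊤ := (lt_of_le_of_lt hc2le (by norm_num)).ne
    have hFvtop : Fv ≠ ⊤ := (lt_of_le_of_lt hFvle (by norm_num)).ne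
    set Fr : ℝ := Fv.toReal with hFrdef
    have hFr0 : 0 ≤ Fr := ENNReal.toReal_nonneg
    have hFr1 : Fr ≤ 1 := by
      rw [hFrdef, show (1:ℝ) = (1:ℝ≥0∞).toReal from rfl]
      exact ENNReal.toReal_mono (by norm_num) hFvle
    have hsumFc : Fv + c2 = 1 := by
      have hh := measure_inter_add_diff (μ := volume) (Set.Icc (0:ℝ) 1) hXm
      rw [hIcc1] at hh
      have e1 : X ∩ Set.Icc (0:ℝ) 1 = Set.Icc (0:ℝ) 1 ∩ X := Set.inter_comm _ _
      have e2 : Xᶜ ∩ Set.Icc (0:ℝ) 1 = Set.Icc (0:ℝ) 1 \ X := by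
        rw [Set.diff_eq, Set.inter_comm]
      rw [hFvdef, hc2def, e1, e2, hh]
    have hc2r : c2.toReal = 1 - Fr := by
      have hh : Fr + c2.toReal = 1 := by
        rw [hFrdef, ← ENNReal.toReal_add hFvtop hc2top, hsumFc, ENNReal.toReal_one]
      linarith
    have hμA2 : μ A2 = c2 ^ k * ENNReal.ofReal (1-u) ^ k := by
      rw [hA2, helper_indep_prod V t hindep BVu BtB (fun p => MeasurableSet.univ) hBtBm]
      have hpV : ∏ p, μ (V p ⁻¹' BVu p) = 1 := by
        rw [hBVu]; simp
      have hpT : ∏ p, μ (t p ⁻¹' BtB p) = c2 ^ k * ENNReal.ofReal (1-u) ^ k := by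
        rw [Fintype.prod_prod_type, Fin.prod_univ_two]
        have e0 : ∀ j : Fin k, μ (t (0,j) ⁻¹' BtB (0,j)) = c2 := by
          intro j; rw [hBtB]
          have := ht_ev (0,j) Xᶜ hXm.compl
          rw [← hc2def] at this
          simpa using this
        have e1 : ∀ j : Fin k, μ (t (1,j) ⁻¹' BtB (1,j)) = ENNReal.ofReal (1-u) := by
          intro j; rw [hBtB]
          have := ht_ev (1,j) (Set.Ioi u) measurableSet_Ioi
          rw [hIoi] at this
          simpa using this
        rw [Finset.prod_congr rfl (fun j _ => e0 j), Finset.prod_congr rfl (fun j _ => e1 j)]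
        simp [Finset.card_univ]
      rw [hpV, hpT, one_mul]
    -- lower bound for F
    have hFrge : u - m2r ≤ Fr := by
      have key : volume (Set.Iic u ∩ Set.Icc (0:ℝ) 1) = ENNReal.ofReal u := by
        have he : Set.Iic u ∩ Set.Icc (0:ℝ) 1 = Set.Icc 0 u := by
          ext x
          simp only [Set.mem_inter_iff, Set.mem_Iic, Set.mem_Icc]
          constructor
          · rintro ⟨h1, h2, _⟩; exact ⟨h2, h1⟩
          · rintro ⟨h1, h2⟩; exact ⟨h2, h1, by linarith⟩
        rw [he, Real.volume_Icc, sub_zero]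
      have hsplit2 := measure_inter_add_diff (μ := volume) (Set.Iic u ∩ Set.Icc (0:ℝ) 1) hSm
      rw [key] at hsplit2
      have e3 : (Set.Iic u ∩ Set.Icc (0:ℝ) 1) ∩ S = X ∩ Set.Icc 0 1 := by
        rw [hXdef]
        ext x
        simp only [Set.mem_inter_iff, Set.mem_Iic, Set.mem_Icc]
        tauto
      have e4 : (Set.Iic u ∩ Set.Icc (0:ℝ) 1) \ S ⊆ Sᶜ ∩ Set.Icc 0 1 := by
        rintro x ⟨⟨_, h2⟩, h3⟩
        exact ⟨h3, h2⟩
      have h5 : ENNReal.ofReal u ≤ Fv + m2 := by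
        rw [← hsplit2, hFvdef, ← e3]
        exact add_le_add_right (measure_mono e4) _
      have h6 : (ENNReal.ofReal u).toReal ≤ (Fv + m2).toReal :=
        ENNReal.toReal_mono (by
          exact ENNReal.add_ne_top.mpr ⟨hFvtop, hm2top⟩) h5
      rw [ENNReal.toReal_add hFvtop hm2top, ENNReal.toReal_ofReal hu0.le] at h6
      rw [hFrdef]
      linarith [h6]
    have hFrL : 1/L ≤ Fr := by
      have : u - m2r ≥ 2/L - 1/L := by
        rw [hudef]
        linarith [hcase]
      have h7 : (2:ℝ)/L - 1/L = 1/L := by ring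
      linarith [hFrge]
    -- the good event
    set G1 : Set Ω := A1 \ A2 with hG1def
    have hG1m : MeasurableSet G1 := hA1m.diff hA2m
    have hg1 : (μ G1).toReal = (1-u)^k * (1 - (1-Fr)^k) := by
      have hμG1 : μ G1 = μ A1 - μ A2 :=
        measure_diff hA2sub hA2m.nullMeasurableSet (measure_ne_top μ A2)
      have hle : μ A2 ≤ μ A1 := measure_mono hA2sub
      have h1u0 : (0:ℝ) ≤ 1 - u := by linarith
      have hc2o : c2 = ENNReal.ofReal (1 - Fr) := by
        rw [← hc2r, ENNReal.ofReal_toReal hc2top]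
      have hFr0' : (0:ℝ) ≤ 1 - Fr := by linarith
      rw [hμG1, ENNReal.toReal_sub_of_le hle (measure_ne_top μ A1), hμA1, hμA2, hc2o]
      rw [← ENNReal.ofReal_pow h1u0, ← ENNReal.ofReal_pow hFr0',
        ← ENNReal.ofReal_mul (pow_nonneg hFr0' k),
        ENNReal.toReal_ofReal (pow_nonneg h1u0 k),
        ENNReal.toReal_ofReal (mul_nonneg (pow_nonneg hFr0' k) (pow_nonneg h1u0 k))]
      ring
    -- numeric lower bound on μ G1
    have hkLr : (k:ℝ)/L = 1/(4*lg) := by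
      rw [div_eq_div_iff hLpos.ne' (by positivity)]
      linarith [hklg]
    have hku : (k:ℝ) * u = 1/(2*lg) := by
      rw [hudef]
      calc (k:ℝ) * (2/L) = 2*((k:ℝ)/L) := by ring
        _ = 2*(1/(4*lg)) := by rw [hkLr]
        _ = 1/(2*lg) := by ring
    have h34 : (3:ℝ)/4 ≤ (1-u)^k := by
      have hb := one_add_mul_le_pow (show (-2:ℝ) ≤ -u by linarith) k
      have hb2 : (1:ℝ) + (k:ℝ) * (-u) ≤ (1-u)^k := by
        calc (1:ℝ) + (k:ℝ) * (-u) = 1 + (k:ℝ) * (-u) := rfl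
          _ ≤ (1 + -u)^k := hb
          _ = (1-u)^k := by ring_nf
      have hlg4 : 1/(2*lg) ≤ 1/4 := by
        rw [div_le_div_iff₀ (by positivity) (by norm_num)]
        linarith
      have : (k:ℝ) * (-u) = -(1/(2*lg)) := by rw [← hku]; ring
      rw [this] at hb2
      linarith
    have hFku : (1-Fr)^k ≤ 1 - 1/(8*lg) := by
      have hy : (k:ℝ)/L = 1/(4*lg) := hkLr
      have hstep1 : (1-Fr)^k ≤ (1-1/L)^k := by
        apply pow_le_pow_left₀ (by linarith) (by linarith [hFrL]) k
      have hstep2 : ((1:ℝ)-1/L)^k ≤ Real.exp (-(1/L))^k := by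
        apply pow_le_pow_left₀ (by
          have : (1:ℝ)/L ≤ 1/2 := by
            rw [div_le_div_iff₀ hLpos (by norm_num)]
            linarith
          linarith) (by linarith [Real.add_one_le_exp (-(1/L))]) k
      have hstep3 : Real.exp (-(1/L))^k = Real.exp (-((k:ℝ)/L)) := by
        rw [← Real.exp_nat_mul]
        congr 1
        ring
      have hstep4 : Real.exp (-((k:ℝ)/L)) ≤ 1/(1+(k:ℝ)/L) := by
        rw [Real.exp_neg, one_div]
        exact inv_anti₀ (by positivity) (by linarith [Real.add_one_le_exp ((k:ℝ)/L)])
      have hstep5 : 1/(1+(k:ℝ)/L) ≤ 1 - 1/(8*lg) := by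
        rw [hy]
        have hlgp : (0:ℝ) < 4*lg := by positivity
        have hq : (0:ℝ) < 1 + 1/(4*lg) := by positivity
        rw [div_le_iff₀ hq]
        have hyy : 1/(4*lg) ≤ 1 := by
          rw [div_le_one (by positivity)]
          linarith
        have expand : (1 - 1/(8*lg)) * (1 + 1/(4*lg)) =
            1 + 1/(8*lg) - 1/(8*lg) * (1/(4*lg)) := by ring
        rw [expand]
        have : 1/(8*lg) * (1/(4*lg)) ≤ 1/(8*lg) := by
          have hmul := mul_le_mul_of_nonneg_left hyy (show (0:ℝ) ≤ 1/(8*lg) by positivity)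
          linarith only [hmul]
        linarith
      calc (1-Fr)^k ≤ (1-1/L)^k := hstep1
        _ ≤ Real.exp (-(1/L))^k := hstep2
        _ = Real.exp (-((k:ℝ)/L)) := hstep3
        _ ≤ 1/(1+(k:ℝ)/L) := hstep4
        _ ≤ 1 - 1/(8*lg) := hstep5
    have hg1ge : 3/(32*lg) ≤ (μ G1).toReal := by
      rw [hg1]
      have h1u0 : (0:ℝ) ≤ 1 - u := by linarith
      calc (3:ℝ)/(32*lg) = (3/4) * (1/(8*lg)) := by ring
        _ ≤ (1-u)^k * (1 - (1-Fr)^k) :=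
          mul_le_mul h34 (by linarith [hFku]) (by positivity) (by positivity)
    -- on G1 the algorithm accepts a deterministic reward of value 1
    have hALG_G1 : ∀ᵐ ω ∂μ, ω ∈ G1 → ALG ω = 1 := by
      filter_upwards [hALGmin, hV0ae, hV1ae] with ω hm hv0 hv1 hmem
      rw [hG1def, Set.mem_diff] at hmem
      obtain ⟨hA1mem, hA2mem⟩ := hmem
      rw [hA1, Set.mem_inter_iff, Set.mem_iInter, Set.mem_iInter] at hA1mem
      obtain ⟨hAV, hAt⟩ := hA1mem
      have hex : ∃ j : Fin k, t (0,j) ω ∈ X := by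
        by_contra hno
        push_neg at hno
        apply hA2mem
        rw [hA2, Set.mem_inter_iff, Set.mem_iInter, Set.mem_iInter]
        constructor
        · intro p
          rw [hBVu]
          exact Set.mem_univ _
        · rintro ⟨i, j⟩
          rcases (by omega : i = 0 ∨ i = 1) with hi | hi <;> subst hi
          · rw [hBtB]
            simpa using hno j
          · have hmem1 := hAt (1,j)
            rw [hBtA] at hmem1
            rw [hBtB]
            simpa using hmem1
      obtain ⟨j₀, hj₀⟩ := hex
      rw [hXdef] at hj₀
      have hj₀S : t (0,j₀) ω ∈ S := hj₀.1
      have hj₀u : t (0,j₀) ω ≤ u := hj₀.2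
      have hacc0 : τ (t (0,j₀) ω) < V (0,j₀) ω := by
        rw [hv0 j₀]
        simpa [hSdef] using hj₀S
      obtain ⟨p, hp, hpmin⟩ := hminsel ω ⟨(0,j₀), hacc0⟩
      have hALGp : ALG ω = V p ω := hm p hp hpmin
      obtain ⟨i, j⟩ := p
      rcases (by omega : i = 0 ∨ i = 1) with hi | hi <;> subst hi
      · rw [hALGp, hv0 j]
      · exfalso
        have h1 : u < t (1,j) ω := by
          have hmem1 := hAt (1,j)
          rw [hBtA] at hmem1
          simpa using hmem1
        have h2 : t (1,j) ω ≤ t (0,j₀) ω := hpmin (0,j₀) hacc0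
        linarith
    -- conclusion of case 2
    have hbound := helper_int_bound μ ALG hALGm hG1m 1 (1 + Real.sqrt ε) (by linarith)
      hALGlo hALGhi hALG_G1
    have h1k4 : 1/(k:ℝ) = 4*lg/L := by
      rw [hk, one_div_div]
    have hQ2 : (10000:ℝ) ≤ Q^2 := by nlinarith only [hQ100, hQpos]
    have hnum : 4*lg/L + 2*(8/Q^4) < 3/(32*lg) := by
      have hA : 4*lg/L ≤ 16/Q^3 := by
        rw [← hQ4, div_le_div_iff₀ (by positivity) (by positivity)]
        nlinarith only [mul_le_mul_of_nonneg_right hlgQ (pow_pos hQpos 3).le]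
      have hQ3 : 10000*Q ≤ Q^3 := by
        nlinarith only [mul_le_mul_of_nonneg_right hQ2 hQpos.le]
      have hQ34 : Q^3 ≤ Q^4 := by
        nlinarith only [mul_nonneg (pow_pos hQpos 3).le (show (0:ℝ) ≤ Q - 1 by linarith only [hQ100])]
      have e3 : 16/Q^3 ≤ 16/(10000*Q) := by
        rw [div_le_div_iff₀ (by positivity) (by positivity)]
        nlinarith only [hQ3]
      have e4 : 16/Q^4 ≤ 16/(10000*Q) := by
        rw [div_le_div_iff₀ (by positivity) (by positivity)]
        nlinarith only [hQ3, hQ34]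
      have e5 : (32:ℝ)/(10000*Q) < 3/(128*Q) := by
        rw [div_lt_div_iff₀ (by positivity) (by positivity)]
        nlinarith only [hQpos]
      have hB : 3/(128*Q) ≤ 3/(32*lg) := by
        rw [div_le_div_iff₀ (by positivity) (by positivity)]
        linarith only [hlgQ]
      have hAB : 4*lg/L + 2*(8/Q^4) ≤ 16/(10000*Q) + 16/(10000*Q) := by
        have h16 : 2*((8:ℝ)/Q^4) = 16/Q^4 := by ring
        rw [h16]
        linarith only [hA.trans e3, e4]
      have hmid : 16/(10000*Q) + 16/(10000*Q) = (32:ℝ)/(10000*Q) := by ring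
      linarith only [hAB, e5, hB, hmid]
    have hg1gt : 1/(k:ℝ) + 2*Real.sqrt ε < (μ G1).toReal := by
      rw [h1k4]
      linarith only [hg1ge, hnum, hsqQ]
    have hεs : ε = Real.sqrt ε ^ 2 := (Real.sq_sqrt hε.le).symm
    have h1kpos : 0 < 1/(k:ℝ) := by positivity
    have h1khalf : 1/(k:ℝ) ≤ 1/2 := by
      apply one_div_le_one_div_of_le <;> linarith
    have hkey : 0 < Real.sqrt ε * ((μ G1).toReal - 1/(k:ℝ) - Real.sqrt ε
        - Real.sqrt ε^2 * (1 - 1/(k:ℝ))) := by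
      apply mul_pos hsqpos
      have h1 : Real.sqrt ε^2 * (1 - 1/(k:ℝ)) ≤ Real.sqrt ε := by
        nlinarith only [mul_le_mul_of_nonneg_left (show 1 - 1/(k:ℝ) ≤ 1 by linarith only [h1kpos])
          (sq_nonneg (Real.sqrt ε)), mul_le_mul_of_nonneg_right hsq1 hsqnn]
      linarith only [hg1gt, h1]
    calc ∫ ω, ALG ω ∂μ
        ≤ 1 * (μ G1).toReal + (1+Real.sqrt ε) * (1-(μ G1).toReal) := hbound
      _ < (1-ε) * (1+Real.sqrt ε * (1-1/(k:ℝ))) := by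
          rw [show (1:ℝ) - ε = 1 - Real.sqrt ε^2 from by rw [Real.sq_sqrt hε.le]]
          nlinarith only [hkey]
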